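/- Let (Ω, ℱ, P) be a probability space, let f : ℝ^d → ℝ be differentiable and L-smooth with L > 0, and suppose f(x) ≥ f* for all x ∈ ℝ^d. Let p ∈ (0, 1], b > 0, b' > 0, σ ≥ 0, and 0 < η ≤ 1/(L(1 + √((1 − p)/(p b')))). Let x⁰ ∈ ℝ^d and let x_t, g_t : Ω → ℝ^d (t = 0, 1, 2, …) be measurable with x_0 = x⁰, E‖g_0 − ∇f(x⁰)‖² ≤ σ²/b, x_{t+1} = x_t − η g_t almost surely, and suppose f ∘ x_t, ‖∇f(x_t)‖², ‖g_t − ∇f(x_t)‖² and ‖x_{t+1} − x_t‖² are integrable for every t. Assume that for every t ≥ 0 the estimator recursion E‖g_{t+1} − ∇f(x_{t+1})‖² ≤ p σ²/b + ((1 − p) L²/b') · E‖x_{t+1} − x_t‖² + (1 − p) · E‖g_t − ∇f(x_t)‖² holds. Then for every integer T ≥ 1, (1/T)∑_{t=0}^{T−1} E‖∇f(x_t)‖² ≤ 2(f(x⁰) − f*)/(η T) + σ²/(p b T) + σ²/b. -/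

import Mathlib

open MeasureTheory
open scoped BigOperators

lemma descent_lemma {d : ℕ} (f : EuclideanSpace ℝ (Fin d) → ℝ) (L : ℝ) (hL : 0 ≤ L)
    (hf : Differentiable ℝ f)
    (hsmooth : ∀ x y : EuclideanSpace ℝ (Fin d),
      ‖gradient f x - gradient f y‖ ≤ L * ‖x - y‖)
    (x y : EuclideanSpace ℝ (Fin d)) :
    f y ≤ f x + inner ℝ (gradient f x) (y - x) + L / 2 * ‖y - x‖ ^ 2 := by
  set v := y - x with hv
  set γ : ℝ → EuclideanSpace ℝ (Fin d) := fun t => x + t • v with hγ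
  have hγd : ∀ t : ℝ, HasDerivAt γ v t := by
    intro t
    simpa [hγ] using ((hasDerivAt_id t).smul_const v).const_add x
  have hφ : ∀ t : ℝ, HasDerivAt (fun s => f (γ s))
      (inner ℝ (gradient f (γ t)) v : ℝ) t := by
    intro t
    have h1 : HasFDerivAt f (InnerProductSpace.toDual ℝ _ (gradient f (γ t))) (γ t) :=
      ((hf (γ t)).hasGradientAt).hasFDerivAt
    have := h1.comp_hasDerivAt t (hγd t)
    simpa [InnerProductSpace.toDual_apply_apply, Function.comp_def] using this
  have hgradcont : Continuous fun z : EuclideanSpace ℝ (Fin d) => gradient f z :=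
    (LipschitzWith.of_dist_le_mul (K := L.toNNReal) (fun z w => by
      rw [Real.coe_toNNReal L hL]
      simpa [dist_eq_norm] using hsmooth z w)).continuous
  have hφ'cont : Continuous fun t : ℝ => (inner ℝ (gradient f (γ t)) v : ℝ) := by
    exact (hgradcont.comp (by continuity)).inner continuous_const
  have hFTC : f (γ 1) - f (γ 0) = ∫ t in (0:ℝ)..1, (inner ℝ (gradient f (γ t)) v : ℝ) :=
    (intervalIntegral.integral_eq_sub_of_hasDerivAt (fun t _ => hφ t)
      (hφ'cont.intervalIntegrable 0 1)).symm
  have hγ0 : γ 0 = x := by simp [hγ]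
  have hγ1 : γ 1 = y := by simp [hγ, hv]
  have hbound : ∫ t in (0:ℝ)..1, (inner ℝ (gradient f (γ t)) v : ℝ)
      ≤ ∫ t in (0:ℝ)..1, (inner ℝ (gradient f x) v + L * t * ‖v‖ ^ 2 : ℝ) := by
    apply intervalIntegral.integral_mono_on (by norm_num)
      (hφ'cont.intervalIntegrable 0 1)
      (((by fun_prop : Continuous fun t : ℝ => (inner ℝ (gradient f x) v + L * t * ‖v‖ ^ 2 : ℝ))).intervalIntegrable 0 1)
    intro t ht
    have h2 : (inner ℝ (gradient f (γ t)) v : ℝ) - inner ℝ (gradient f x) v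
        = inner ℝ (gradient f (γ t) - gradient f x) v := by
      rw [inner_sub_left]
    have h3 : (inner ℝ (gradient f (γ t) - gradient f x) v : ℝ) ≤ L * t * ‖v‖ ^ 2 := by
      calc (inner ℝ (gradient f (γ t) - gradient f x) v : ℝ)
          ≤ ‖gradient f (γ t) - gradient f x‖ * ‖v‖ := real_inner_le_norm _ _
        _ ≤ (L * ‖γ t - x‖) * ‖v‖ := by
            gcongr; exact hsmooth _ _
        _ = L * t * ‖v‖ ^ 2 := by
            have : ‖γ t - x‖ = t * ‖v‖ := by
              simp [hγ, norm_smul, abs_of_nonneg ht.1]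
            rw [this]; ring
    linarith [h2 ▸ h3]
  have hint : ∫ t in (0:ℝ)..1, (inner ℝ (gradient f x) v + L * t * ‖v‖ ^ 2 : ℝ)
      = inner ℝ (gradient f x) v + L / 2 * ‖v‖ ^ 2 := by
    rw [intervalIntegral.integral_add (intervalIntegrable_const)
      ((by fun_prop : Continuous fun t : ℝ => (L * t * ‖v‖ ^ 2 : ℝ)).intervalIntegrable 0 1)]
    have : ∫ t in (0:ℝ)..1, (L * t * ‖v‖ ^ 2 : ℝ)
        = (L * ‖v‖ ^ 2) * ∫ t in (0:ℝ)..1, t := by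
      rw [← intervalIntegral.integral_const_mul]
      congr 1; ext t; ring
    rw [this, integral_id]
    simp; ring
  rw [hγ0, hγ1] at hFTC
  linarith [hFTC ▸ hbound, hint ▸ hbound]

lemma tele_aux (Φ A : ℕ → ℝ) (h e : ℝ)
    (step : ∀ t, Φ (t + 1) ≤ Φ t - h * A t + e) :
    ∀ T : ℕ, Φ T + h * ∑ t ∈ Finset.range T, A t ≤ Φ 0 + T * e := by
  intro T
  induction T with
  | zero => simp
  | succ n ih =>
    rw [Finset.sum_range_succ]
    push_cast
    have := step n
    nlinarith [ih, step n]


lemma step_ptwise {d : ℕ} (f : EuclideanSpace ℝ (Fin d) → ℝ) (L η c : ℝ)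
    (hL : 0 < L) (hη0 : 0 < η) (hc : c = 1 / (2 * η) - L / 2)
    (hf : Differentiable ℝ f)
    (hsmooth : ∀ x y : EuclideanSpace ℝ (Fin d),
      ‖gradient f x - gradient f y‖ ≤ L * ‖x - y‖)
    (X gg : EuclideanSpace ℝ (Fin d)) :
    f (X - η • gg) ≤ f X - η/2 * ‖gradient f X‖ ^ 2
      + η/2 * ‖gg - gradient f X‖ ^ 2 - c * ‖(X - η • gg) - X‖ ^ 2 := by
  have hdesc := descent_lemma f L hL.le hf hsmooth X (X - η • gg)
  set a := gradient f X
  have hYX : (X - η • gg) - X = -(η • gg) := by abel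
  have hip : (inner ℝ a ((X - η • gg) - X) : ℝ) = -(η * inner ℝ a gg) := by
    rw [hYX, inner_neg_right, real_inner_smul_right]
  have hnrm : ‖(X - η • gg) - X‖ ^ 2 = η ^ 2 * ‖gg‖ ^ 2 := by
    rw [hYX, norm_neg, norm_smul, Real.norm_eq_abs, abs_of_nonneg hη0.le]
    ring
  have hsq : ‖gg - a‖ ^ 2 = ‖gg‖ ^ 2 - 2 * inner ℝ gg a + ‖a‖ ^ 2 :=
    norm_sub_sq_real gg a
  have hcomm : (inner ℝ gg a : ℝ) = inner ℝ a gg := real_inner_comm _ _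
  have hcD : c * ‖(X - η • gg) - X‖ ^ 2 = (η/2 - L * η^2/2) * ‖gg‖ ^ 2 := by
    rw [hnrm, hc]; field_simp
  rw [hip, hnrm] at hdesc
  have hsq' : η/2 * ‖gg - a‖ ^ 2 = η/2 * ‖gg‖ ^ 2 - η * inner ℝ a gg + η/2 * ‖a‖ ^ 2 := by
    linear_combination (η/2) * hsq - η * hcomm
  linarith [hdesc, hsq', hcD]


lemma arith2 (u v σ p b η Tr : ℝ) (hη : η ≠ 0) (hp : p ≠ 0) (hb : b ≠ 0) :
    (η/2) * (2 * (u - v) / η + σ ^ 2 / (p * b) + Tr * (σ ^ 2 / b))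
      = (u - v) + (η/(2*p)) * (σ ^ 2 / b) + Tr * (η * σ ^ 2 / (2 * b)) := by
  field_simp

lemma arith3 (u v σ p b η Tr : ℝ) (hη : η ≠ 0) (hp : p ≠ 0) (hb : b ≠ 0) (hT : Tr ≠ 0) :
    (1 / Tr) * (2 * (u - v) / η + σ ^ 2 / (p * b) + Tr * (σ ^ 2 / b))
      = 2 * (u - v) / (η * Tr) + σ ^ 2 / (p * b * Tr) + σ ^ 2 / b := by
  field_simp

theorem stmt_10 {Ω : Type*} [MeasurableSpace Ω] (P : Measure Ω) [IsProbabilityMeasure P]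
    (d : ℕ) (f : EuclideanSpace ℝ (Fin d) → ℝ) (L : ℝ) (hL : 0 < L)
    (hf : Differentiable ℝ f)
    (hsmooth : ∀ x y : EuclideanSpace ℝ (Fin d),
      ‖gradient f x - gradient f y‖ ≤ L * ‖x - y‖)
    (fstar : ℝ) (hfstar : ∀ x, fstar ≤ f x)
    (p : ℝ) (hp0 : 0 < p) (hp1 : p ≤ 1) (b b' : ℝ) (hb : 0 < b) (hb' : 0 < b')
    (σ : ℝ) (hσ : 0 ≤ σ)
    (η : ℝ) (hη0 : 0 < η)
    (hη : η ≤ 1 / (L * (1 + Real.sqrt ((1 - p) / (p * b')))))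
    (x0 : EuclideanSpace ℝ (Fin d))
    (x g : ℕ → Ω → EuclideanSpace ℝ (Fin d))
    (hxm : ∀ t, Measurable (x t)) (hgm : ∀ t, Measurable (g t))
    (hx0 : ∀ᵐ ω ∂P, x 0 ω = x0)
    (hg0 : ∫ ω, ‖g 0 ω - gradient f x0‖ ^ 2 ∂P ≤ σ ^ 2 / b)
    (hupd : ∀ t, ∀ᵐ ω ∂P, x (t + 1) ω = x t ω - η • g t ω)
    (hint1 : ∀ t, Integrable (fun ω => f (x t ω)) P)
    (hint2 : ∀ t, Integrable (fun ω => ‖gradient f (x t ω)‖ ^ 2) P)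
    (hint3 : ∀ t, Integrable (fun ω => ‖g t ω - gradient f (x t ω)‖ ^ 2) P)
    (hint4 : ∀ t, Integrable (fun ω => ‖x (t + 1) ω - x t ω‖ ^ 2) P)
    (hrec : ∀ t, ∫ ω, ‖g (t + 1) ω - gradient f (x (t + 1) ω)‖ ^ 2 ∂P
        ≤ p * σ ^ 2 / b + ((1 - p) * L ^ 2 / b') * ∫ ω, ‖x (t + 1) ω - x t ω‖ ^ 2 ∂P
          + (1 - p) * ∫ ω, ‖g t ω - gradient f (x t ω)‖ ^ 2 ∂P) :
    ∀ T : ℕ, 1 ≤ T →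
      (1 / (T : ℝ)) * ∑ t ∈ Finset.range T, ∫ ω, ‖gradient f (x t ω)‖ ^ 2 ∂P
        ≤ 2 * (f x0 - fstar) / (η * T) + σ ^ 2 / (p * b * T) + σ ^ 2 / b := by
  intro T hT
  -- abbreviations (plain real sequences)
  set F : ℕ → ℝ := fun t => ∫ ω, f (x t ω) ∂P with hFdef
  set A : ℕ → ℝ := fun t => ∫ ω, ‖gradient f (x t ω)‖ ^ 2 ∂P with hAdef
  set G : ℕ → ℝ := fun t => ∫ ω, ‖g t ω - gradient f (x t ω)‖ ^ 2 ∂P with hGdef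
  set D : ℕ → ℝ := fun t => ∫ ω, ‖x (t + 1) ω - x t ω‖ ^ 2 ∂P with hDdef
  set c : ℝ := 1 / (2 * η) - L / 2 with hcdef
  -- coefficient inequality
  have hs0 : (0:ℝ) ≤ (1 - p) / (p * b') := div_nonneg (by linarith) (by positivity)
  set s : ℝ := Real.sqrt ((1 - p) / (p * b')) with hsdef
  have hs : 0 ≤ s := Real.sqrt_nonneg _
  have hssq : s ^ 2 = (1 - p) / (p * b') := Real.sq_sqrt hs0
  have hLs : 0 < L * (1 + s) := by positivity
  have huu : η * L * (1 + s) ≤ 1 := by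
    have := (le_div_iff₀ hLs).mp hη
    linarith
  have hkey : η ^ 2 * L ^ 2 * ((1 - p) / (p * b')) + η * L ≤ 1 := by
    rw [← hssq]
    have h1 : η * L * s ≤ 1 - η * L := by nlinarith
    have h2 : 0 ≤ η * L := by positivity
    nlinarith [mul_self_nonneg (η * L * s), mul_le_mul h1 h1 (by positivity) (by nlinarith)]
  have hDcoef : (η / (2 * p)) * ((1 - p) * L ^ 2 / b') ≤ c := by
    have hx : (1 / (2 * η) - L / 2) - η / (2 * p) * ((1 - p) * L ^ 2 / b')
        = (1 - η * L - η ^ 2 * L ^ 2 * ((1 - p) / (p * b'))) / (2 * η) := by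
      field_simp
    have hy : 0 ≤ (1 - η * L - η ^ 2 * L ^ 2 * ((1 - p) / (p * b'))) / (2 * η) :=
      div_nonneg (by linarith) (by positivity)
    rw [hcdef]; linarith
  -- per-step descent (integrated)
  have hstep : ∀ t, F (t + 1) ≤ F t - (η/2) * A t + (η/2) * G t - c * D t := by
    intro t
    have I2 := (hint2 t).const_mul (η/2)
    have I3 := (hint3 t).const_mul (η/2)
    have I4 := (hint4 t).const_mul c
    have hptwise : ∀ᵐ ω ∂P, f (x (t+1) ω) ≤ f (x t ω) - η/2 * ‖gradient f (x t ω)‖ ^ 2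
        + η/2 * ‖g t ω - gradient f (x t ω)‖ ^ 2 - c * ‖x (t+1) ω - x t ω‖ ^ 2 := by
      filter_upwards [hupd t] with ω hω
      rw [hω]
      exact step_ptwise f L η c hL hη0 hcdef hf hsmooth (x t ω) (g t ω)
    have hRint : Integrable (fun ω => f (x t ω) - η/2 * ‖gradient f (x t ω)‖ ^ 2
        + η/2 * ‖g t ω - gradient f (x t ω)‖ ^ 2 - c * ‖x (t+1) ω - x t ω‖ ^ 2) P :=
      (((hint1 t).sub I2).add I3).sub I4
    have hmono := integral_mono_ae (hint1 (t+1)) hRint hptwise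
    have Ia : Integrable (fun ω => f (x t ω) - η/2 * ‖gradient f (x t ω)‖ ^ 2) P :=
      (hint1 t).sub I2
    have Ib : Integrable (fun ω => f (x t ω) - η/2 * ‖gradient f (x t ω)‖ ^ 2
        + η/2 * ‖g t ω - gradient f (x t ω)‖ ^ 2) P := Ia.add I3
    have heq : ∫ ω, (f (x t ω) - η/2 * ‖gradient f (x t ω)‖ ^ 2
        + η/2 * ‖g t ω - gradient f (x t ω)‖ ^ 2 - c * ‖x (t+1) ω - x t ω‖ ^ 2) ∂P
        = F t - (η/2) * A t + (η/2) * G t - c * D t := by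
      rw [integral_sub Ib I4, integral_add Ia I3, integral_sub (hint1 t) I2,
        integral_const_mul, integral_const_mul, integral_const_mul]
    rw [heq] at hmono
    exact hmono
  -- Lyapunov step
  have hΦstep : ∀ t, (F (t+1) + (η/(2*p)) * G (t+1))
      ≤ (F t + (η/(2*p)) * G t) - (η/2) * A t + η * σ ^ 2 / (2 * b) := by
    intro t
    have hq : (0:ℝ) ≤ η / (2 * p) := by positivity
    have h5 := mul_le_mul_of_nonneg_left (hrec t) hq
    have heq : (η/(2*p)) * (p * σ ^ 2 / b + ((1 - p) * L ^ 2 / b') * D t + (1 - p) * G t)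
        = (η/(2*p)) * (p * σ ^ 2 / b) + ((η/(2*p)) * ((1 - p) * L ^ 2 / b')) * D t
          + ((η/(2*p)) * (1 - p)) * G t := by ring
    have hσc : (η/(2*p)) * (p * σ ^ 2 / b) = η * σ ^ 2 / (2 * b) := by
      field_simp
    have hGc : (η/2) + (η/(2*p)) * (1 - p) = η/(2*p) := by
      field_simp; ring
    have hD0 : 0 ≤ D t := integral_nonneg fun ω => by positivity
    have hDterm : ((η/(2*p)) * ((1 - p) * L ^ 2 / b')) * D t ≤ c * D t :=
      mul_le_mul_of_nonneg_right hDcoef hD0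
    have hGc' : (η/2) * G t + ((η/(2*p)) * (1 - p)) * G t = (η/(2*p)) * G t := by
      linear_combination (G t) * hGc
    rw [heq] at h5
    linarith [hstep t, h5, hDterm, hGc']
  -- telescoping
  have htele := tele_aux (fun t => F t + (η/(2*p)) * G t) A (η/2) (η * σ ^ 2 / (2 * b)) hΦstep T
  -- bounds at 0 and T
  have hF0 : F 0 = f x0 := by
    have : F 0 = ∫ _ω, f x0 ∂P :=
      integral_congr_ae (hx0.mono fun ω h => by simp [h])
    rw [this, integral_const]; simp
  have hG0 : G 0 ≤ σ ^ 2 / b := by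
    have : G 0 = ∫ ω, ‖g 0 ω - gradient f x0‖ ^ 2 ∂P :=
      integral_congr_ae (hx0.mono fun ω h => by simp [h])
    rw [this]; exact hg0
  have hFT : fstar ≤ F T := by
    have : (fstar : ℝ) = ∫ _ω, fstar ∂P := by rw [integral_const]; simp
    rw [this]
    exact integral_mono (integrable_const _) (hint1 T) fun ω => hfstar _
  have hGT : 0 ≤ G T := integral_nonneg fun ω => by positivity
  have hq : (0:ℝ) ≤ η / (2 * p) := by positivity
  have hΦ0 : F 0 + (η/(2*p)) * G 0 ≤ f x0 + (η/(2*p)) * (σ ^ 2 / b) := by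
    rw [hF0]
    have := mul_le_mul_of_nonneg_left hG0 hq
    linarith
  clear_value F A G D c s
  -- final arithmetic
  have hTpos : (0:ℝ) < T := by exact_mod_cast hT
  have hsum : (η/2) * ∑ t ∈ Finset.range T, A t
      ≤ (f x0 - fstar) + (η/(2*p)) * (σ ^ 2 / b) + T * (η * σ ^ 2 / (2 * b)) := by
    linarith only [htele, hΦ0, hFT, mul_nonneg hq hGT]
  have hkey2 : ∑ t ∈ Finset.range T, A t
      ≤ 2 * (f x0 - fstar) / η + σ ^ 2 / (p * b) + T * (σ ^ 2 / b) := by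
    have hhalf : (0:ℝ) < η / 2 := by positivity
    rw [← mul_le_mul_iff_right₀ hhalf]
    rw [arith2 (f x0) fstar σ p b η (T:ℝ) hη0.ne' hp0.ne' hb.ne']
    exact hsum
  calc (1 / (T : ℝ)) * ∑ t ∈ Finset.range T, A t
      ≤ (1 / (T : ℝ)) * (2 * (f x0 - fstar) / η + σ ^ 2 / (p * b) + T * (σ ^ 2 / b)) := by
        apply mul_le_mul_of_nonneg_left hkey2 (by positivity)
    _ = 2 * (f x0 - fstar) / (η * T) + σ ^ 2 / (p * b * T) + σ ^ 2 / b :=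
        arith3 (f x0) fstar σ p b η (T:ℝ) hη0.ne' hp0.ne' hb.ne' hTpos.ne'
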